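/- Let L be a CSL on a separable Hilbert space. If every element of L is singly generated (for each P ∈ L there is x ∈ PH with {Alg L · x} = PH), then L is hyperatomic (every nonzero projection in L is generated by finitely many atoms). -/

import Mathlib

noncomputable section

open scoped InnerProductSpace

variable {H : Type*} [NormedAddCommGroup H] [InnerProductSpace ℂ H] [CompleteSpace H]

/-- `P` is an orthogonal projection on `H`. -/
def IsOrthProj (P : H →L[ℂ] H) : Prop := IsSelfAdjoint P ∧ P ∘L P = P

/-- The usual order on orthogonal projections: `P ≤ Q` iff `Q P = P` (range containment). -/
def pLE (P Q : H →L[ℂ] H) : Prop := Q ∘L P = P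

/-- An atom of the lattice `L`: a nonzero interval projection `E - F` (`E, F ∈ L`, `F ≤ E`)
containing no interval projection other than `0` and itself. -/
def IsAtomOf (L : Set (H →L[ℂ] H)) (A : H →L[ℂ] H) : Prop :=
  A ≠ 0 ∧ (∃ E ∈ L, ∃ F ∈ L, pLE F E ∧ A = E - F) ∧
    ∀ E ∈ L, ∀ F ∈ L, pLE F E → pLE (E - F) A → E - F = 0 ∨ E - F = A

/-- `L` is a commutative subspace lattice (CSL): a strongly closed complete lattice of
mutually commuting orthogonal projections containing `0` and `I`.  Completeness is expressed
by the existence, for every subset, of a member of `L` realizing the honest infimum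
(intersection of ranges) and the honest supremum (closed span of ranges). -/
def IsCSL (L : Set (H →L[ℂ] H)) : Prop :=
  (∀ P ∈ L, IsOrthProj P) ∧
  (∀ P ∈ L, ∀ Q ∈ L, P ∘L Q = Q ∘L P) ∧
  (0 : H →L[ℂ] H) ∈ L ∧ (1 : H →L[ℂ] H) ∈ L ∧
(∀ S ⊆ L, ∃ P ∈ L, (∀ Q ∈ S, pLE P Q) ∧
      LinearMap.range (P : H →ₗ[ℂ] H) = ⨅ Q ∈ S, LinearMap.range (Q : H →ₗ[ℂ] H)) ∧
  (∀ S ⊆ L, ∃ P ∈ L, (∀ Q ∈ S, pLE Q P) ∧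
      LinearMap.range (P : H →ₗ[ℂ] H) = (⨆ Q ∈ S, LinearMap.range (Q : H →ₗ[ℂ] H)).topologicalClosure)

/-- `Alg L`: the algebra of operators leaving every projection of `L` invariant. -/
def AlgL (L : Set (H →L[ℂ] H)) : Set (H →L[ℂ] H) :=
  {T | ∀ P ∈ L, (1 - P) ∘L (T ∘L P) = 0}

/-- The (not necessarily closed) orbit `{Alg L · x}` of a vector `x`. -/
def orbit (L : Set (H →L[ℂ] H)) (x : H) : Set H :=
  {y | ∃ T ∈ AlgL L, T x = y}

/-- `P` is hyperatomic in `L`: `P = E(A₁, …, Aₖ)`, the smallest projection of `L`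
dominating finitely many atoms `A₁, …, Aₖ` of `L`. -/
def HyperatomicIn (L : Set (H →L[ℂ] H)) (P : H →L[ℂ] H) : Prop :=
  ∃ (k : ℕ) (A : Fin k → H →L[ℂ] H), (∀ j, IsAtomOf L (A j)) ∧
    (∀ j, pLE (A j) P) ∧ ∀ F ∈ L, (∀ j, pLE (A j) F) → pLE P F

set_option linter.unusedSectionVars false
set_option linter.unusedVariables false
set_option maxHeartbeats 1000000

lemma sg_contract (R : H →L[ℂ] H) (h1 : IsSelfAdjoint R) (h2 : R * R = R) (w : H) :
    ‖R w‖ ≤ ‖w‖ := by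
  have hadj : ContinuousLinearMap.adjoint R = R := h1.adjoint_eq
  have h3 : ⟪R w, R w⟫_ℂ = ⟪w, R w⟫_ℂ := by
    have h := ContinuousLinearMap.adjoint_inner_left R (R w) w
    rw [hadj] at h
    rw [h]
    have : R (R w) = (R * R) w := rfl
    rw [this, h2]
  have h4 : (‖R w‖ : ℝ) * ‖R w‖ ≤ ‖w‖ * ‖R w‖ := by
    calc ‖R w‖ * ‖R w‖ = ‖⟪R w, R w⟫_ℂ‖ := by
          rw [inner_self_eq_norm_sq_to_K (𝕜 := ℂ) (R w)]
          simp [norm_pow, RCLike.norm_ofReal, sq]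
    _ = ‖⟪w, R w⟫_ℂ‖ := by rw [h3]
    _ ≤ ‖w‖ * ‖R w‖ := norm_inner_le_norm _ _
  rcases eq_or_lt_of_le (norm_nonneg (R w)) with h|h
  · rw [← h]; exact norm_nonneg w
  · exact le_of_mul_le_mul_right h4 h

lemma sg_mem_range_iff {P : H →L[ℂ] H} (hP : P * P = P) (v : H) :
    v ∈ LinearMap.range (P : H →ₗ[ℂ] H) ↔ P v = v := by
  constructor
  · rintro ⟨w, rfl⟩
    have : (P * P) w = P w := by rw [hP]
    exact this
  · intro h; exact ⟨v, h⟩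

lemma sg_proj_ext {E J : H →L[ℂ] H} (hE1 : IsSelfAdjoint E) (hE2 : E * E = E)
    (hJ1 : IsSelfAdjoint J) (hJ2 : J * J = J)
    (h : LinearMap.range (E : H →ₗ[ℂ] H) = LinearMap.range (J : H →ₗ[ℂ] H)) : E = J := by
  have hEJ : E * J = J := by
    ext v
    exact (sg_mem_range_iff hE2 (J v)).1 (h ▸ ⟨v, rfl⟩)
  have hJE : J * E = E := by
    ext v
    exact (sg_mem_range_iff hJ2 (E v)).1 (h ▸ ⟨v, rfl⟩)
  calc E = star E := hE1.symm
  _ = star (J * E) := by rw [hJE]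
  _ = star E * star J := by rw [star_mul]
  _ = E * J := by rw [hE1.star_eq, hJ1.star_eq]
  _ = J := hEJ

lemma sg_mul_idem {P Q : H →L[ℂ] H} (hP2 : P * P = P) (hQ2 : Q * Q = Q)
    (hc : P * Q = Q * P) : (P * Q) * (P * Q) = P * Q := by
  rw [mul_assoc, ← mul_assoc Q P Q, ← hc, mul_assoc, hQ2, ← mul_assoc, hP2]

lemma sg_one_sub_idem {P : H →L[ℂ] H} (hP2 : P * P = P) :
    (1 - P) * (1 - P) = 1 - P := by
  rw [sub_mul, one_mul, mul_sub, mul_one, hP2]; abel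

lemma sg_join_orthProj {P Q : H →L[ℂ] H} (hP1 : IsSelfAdjoint P) (hP2 : P * P = P)
    (hQ1 : IsSelfAdjoint Q) (hQ2 : Q * Q = Q) (hc : P * Q = Q * P) :
    IsSelfAdjoint (P + Q - P * Q) ∧ (P + Q - P * Q) * (P + Q - P * Q) = P + Q - P * Q := by
  constructor
  · have : star (P + Q - P * Q) = P + Q - Q * P := by
      simp [star_sub, star_add, star_mul, hP1.star_eq, hQ1.star_eq]
    rw [IsSelfAdjoint, this, hc]
  · have hcc : (1 - P) * (1 - Q) = (1 - Q) * (1 - P) := by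
      have h1 : Commute P Q := hc
      exact ((Commute.one_left (1 - Q)).sub_left ((Commute.one_right P).sub_right h1)).eq
    have hR2 : ((1 - P) * (1 - Q)) * ((1 - P) * (1 - Q)) = (1 - P) * (1 - Q) :=
      sg_mul_idem (sg_one_sub_idem hP2) (sg_one_sub_idem hQ2) hcc
    have hJeq : P + Q - P * Q = 1 - (1 - P) * (1 - Q) := by noncomm_ring
    rw [hJeq, sg_one_sub_idem hR2]

lemma sg_join_mem {L : Set (H →L[ℂ] H)} (hL : IsCSL L) {P Q : H →L[ℂ] H}
    (hP : P ∈ L) (hQ : Q ∈ L) : P + Q - P * Q ∈ L := by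
  obtain ⟨hproj, hcomm, -, -, -, hsup⟩ := hL
  obtain ⟨hP1, hP2'⟩ := hproj P hP
  obtain ⟨hQ1, hQ2'⟩ := hproj Q hQ
  have hP2 : P * P = P := hP2'
  have hQ2 : Q * Q = Q := hQ2'
  have hc : P * Q = Q * P := hcomm P hP Q hQ
  obtain ⟨G, hGL, hGub, hGr⟩ := hsup {P, Q} (by
    intro R hR; rcases hR with rfl | rfl; exacts [hP, hQ])
  obtain ⟨hJ1, hJ2⟩ := sg_join_orthProj hP1 hP2 hQ1 hQ2 hc
  set J := P + Q - P * Q with hJdef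
  have hcw : ∀ w, P (Q w) = Q (P w) := fun w => ContinuousLinearMap.ext_iff.1 hc w
  have hrJ : LinearMap.range (J : H →ₗ[ℂ] H) = LinearMap.range (P : H →ₗ[ℂ] H) ⊔ LinearMap.range (Q : H →ₗ[ℂ] H) := by
    apply le_antisymm
    · rintro v ⟨w, rfl⟩
      have : J w = P w + Q (w - P w) := by
        simp only [hJdef, ContinuousLinearMap.sub_apply, ContinuousLinearMap.add_apply,
          ContinuousLinearMap.mul_apply, map_sub, hcw]
        abel
      rw [ContinuousLinearMap.coe_coe, this]
      exact Submodule.add_mem_sup ⟨w, rfl⟩ ⟨w - P w, rfl⟩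
    · rw [sup_le_iff]
      constructor
      · rintro v ⟨w, rfl⟩
        refine ⟨P w, ?_⟩
        show P (P w) + Q (P w) - P (Q (P w)) = P w
        rw [hcw, ← ContinuousLinearMap.mul_apply P P, hP2]
        abel
      · rintro v ⟨w, rfl⟩
        refine ⟨Q w, ?_⟩
        show P (Q w) + Q (Q w) - P (Q (Q w)) = Q w
        rw [← ContinuousLinearMap.mul_apply Q Q, hQ2]
        abel
  have hclosed : IsClosed ((LinearMap.range (J : H →ₗ[ℂ] H) : Submodule ℂ H) : Set H) := by
    have : ((LinearMap.range (J : H →ₗ[ℂ] H) : Submodule ℂ H) : Set H)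
        = ((LinearMap.ker ((1 - J : H →L[ℂ] H) : H →ₗ[ℂ] H) : Submodule ℂ H) : Set H) := by
      ext v
      simp only [SetLike.mem_coe]
      rw [sg_mem_range_iff hJ2, LinearMap.mem_ker]
      constructor
      · intro h
        show v - J v = 0
        rw [h, sub_self]
      · intro h
        have h' : v - J v = 0 := h
        exact (sub_eq_zero.mp h').symm
    rw [this]
    exact ContinuousLinearMap.isClosed_ker _
  have hGJ : G = J := by
    obtain ⟨hG1, hG2'⟩ := hproj G hGL
    refine sg_proj_ext hG1 hG2' hJ1 hJ2 ?_
    rw [hGr]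
    have : (⨆ R ∈ ({P, Q} : Set (H →L[ℂ] H)), LinearMap.range (R : H →ₗ[ℂ] H))
        = LinearMap.range (P : H →ₗ[ℂ] H) ⊔ LinearMap.range (Q : H →ₗ[ℂ] H) := iSup_pair
    rw [this, ← hrJ]
    exact IsClosed.submodule_topologicalClosure_eq hclosed
  rwa [hGJ] at hGL

lemma sg_key {L : Set (H →L[ℂ] H)} (hL : IsCSL L) {P : H →L[ℂ] H} (hP : P ∈ L) {x : H}
    (hx : P x = x) (horb : orbit L x = (LinearMap.range (P : H →ₗ[ℂ] H) : Set H)) :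
    ∃ δ > 0, ∀ Q ∈ L, ¬ pLE P Q → δ ≤ ‖(1 - Q) x‖ := by
  obtain ⟨hproj, hcomm, -, -, -, -⟩ := hL
  obtain ⟨hP1, hP2'⟩ := hproj P hP
  have hP2 : P * P = P := hP2'
  -- AlgL as a closed submodule
  let V : Submodule ℂ (H →L[ℂ] H) :=
    { carrier := AlgL L
      add_mem' := fun {a b} ha hb Q hQ => by
        rw [ContinuousLinearMap.add_comp, ContinuousLinearMap.comp_add, ha Q hQ, hb Q hQ,
          add_zero]
      zero_mem' := fun Q hQ => by
        rw [ContinuousLinearMap.zero_comp, ContinuousLinearMap.comp_zero]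
      smul_mem' := fun c {a} ha Q hQ => by
        rw [ContinuousLinearMap.smul_comp, ContinuousLinearMap.comp_smul, ha Q hQ, smul_zero] }
  have hVc : IsClosed (V : Set (H →L[ℂ] H)) := by
    have heq : (V : Set (H →L[ℂ] H)) = ⋂ Q ∈ L, {T | (1 - Q) ∘L (T ∘L Q) = 0} := by
      ext T; simp only [SetLike.mem_coe, Set.mem_iInter, Set.mem_setOf_eq]; rfl
    rw [heq]
    refine isClosed_biInter fun Q hQ => ?_
    have : {T : H →L[ℂ] H | (1 - Q) ∘L (T ∘L Q) = 0}
        = (fun T : H →L[ℂ] H => (1 - Q) ∘L (T ∘L Q)) ⁻¹' {0} := by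
      ext T; simp
    rw [this]
    have hcont : Continuous fun T : H →L[ℂ] H => (1 - Q) ∘L (T ∘L Q) := by
      have : (fun T : H →L[ℂ] H => (1 - Q) ∘L (T ∘L Q))
          = (ContinuousLinearMap.compL ℂ H H H (1 - Q)) ∘
            (fun T : H →L[ℂ] H => ((ContinuousLinearMap.compL ℂ H H H).flip Q) T) := rfl
      rw [this]
      exact ((ContinuousLinearMap.compL ℂ H H H (1 - Q)).continuous).comp
        ((ContinuousLinearMap.compL ℂ H H H).flip Q).continuous
    exact IsClosed.preimage hcont isClosed_singleton
  haveI : CompleteSpace V := hVc.completeSpace_coe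
  set N : Submodule ℂ H := LinearMap.ker ((1 - P : H →L[ℂ] H) : H →ₗ[ℂ] H) with hNdef
  have hNc : IsClosed (N : Set H) := ContinuousLinearMap.isClosed_ker _
  haveI : CompleteSpace N := hNc.completeSpace_coe
  have hrangeN : (LinearMap.range (P : H →ₗ[ℂ] H) : Set H) = (N : Set H) := by
    ext v
    simp only [SetLike.mem_coe, hNdef, LinearMap.mem_ker]
    rw [sg_mem_range_iff hP2]
    constructor
    · intro h; show v - P v = 0; rw [h, sub_self]
    · intro h; exact (sub_eq_zero.mp h).symm
  -- the evaluation map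
  let φ : V →L[ℂ] N := ContinuousLinearMap.codRestrict
    ((ContinuousLinearMap.apply ℂ H x).comp V.subtypeL) N (by
      intro T
      have hT : (T : H →L[ℂ] H) ∈ AlgL L := T.2
      have : (T : H →L[ℂ] H) x ∈ orbit L x := ⟨T, hT, rfl⟩
      rw [horb, hrangeN] at this
      exact this)
  have hsurj : Function.Surjective φ := by
    rintro ⟨y, hy⟩
    have : y ∈ (LinearMap.range (P : H →ₗ[ℂ] H) : Set H) := by rw [hrangeN]; exact hy
    rw [← horb] at this
    obtain ⟨T, hT, hTx⟩ := this
    exact ⟨⟨T, hT⟩, Subtype.ext hTx⟩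
  obtain ⟨C, hC0, hCp⟩ := φ.exists_preimage_norm_le hsurj
  refine ⟨1 / C, by positivity, ?_⟩
  intro Q hQ hnle
  by_contra hlt
  push_neg at hlt
  apply hnle
  obtain ⟨hQ1, hQ2'⟩ := hproj Q hQ
  have hQ2 : Q * Q = Q := hQ2'
  have hc : P * Q = Q * P := hcomm P hP Q hQ
  -- bound on (1-Q)P pointwise
  have hbound : ∀ v : H, ‖((1 - Q) * P) v‖ ≤ (C * ‖(1 - Q) x‖) * ‖v‖ := by
    intro v
    have hPv : P v ∈ N := by
      rw [← SetLike.mem_coe, ← hrangeN]; exact ⟨v, rfl⟩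
    obtain ⟨T, hTeq, hTnorm⟩ := hCp ⟨P v, hPv⟩
    have hTx : (T : H →L[ℂ] H) x = P v := congrArg Subtype.val hTeq
    have hTA : (T : H →L[ℂ] H) ∈ AlgL L := T.2
    have hzero : ((1 - Q) ∘L ((T : H →L[ℂ] H) ∘L Q)) x = 0 := by rw [hTA Q hQ]; rfl
    have hsplit : ((1 - Q) * P) v = (1 - Q) ((T : H →L[ℂ] H) ((1 - Q) x)) := by
      have h1 : ((1 - Q) * P) v = (1 - Q) ((T : H →L[ℂ] H) x) := by
        show (1 - Q) (P v) = _
        rw [hTx]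
      have h2 : (T : H →L[ℂ] H) x
          = (T : H →L[ℂ] H) (Q x) + (T : H →L[ℂ] H) ((1 - Q) x) := by
        rw [← map_add]
        congr 1
        show x = Q x + (x - Q x)
        abel
      rw [h1, h2, map_add]
      have h3 : (1 - Q) ((T : H →L[ℂ] H) (Q x)) = 0 := hzero
      rw [h3, zero_add]
    rw [hsplit]
    have hsa : IsSelfAdjoint (1 - Q) := by
      rw [IsSelfAdjoint, star_sub, star_one, hQ1.star_eq]
    calc ‖(1 - Q) ((T : H →L[ℂ] H) ((1 - Q) x))‖
        ≤ ‖(T : H →L[ℂ] H) ((1 - Q) x)‖ := sg_contract _ hsa (sg_one_sub_idem hQ2) _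
    _ ≤ ‖(T : H →L[ℂ] H)‖ * ‖(1 - Q) x‖ := ContinuousLinearMap.le_opNorm _ _
    _ ≤ (C * ‖P v‖) * ‖(1 - Q) x‖ := by
        apply mul_le_mul_of_nonneg_right _ (norm_nonneg _)
        calc ‖(T : H →L[ℂ] H)‖ = ‖T‖ := rfl
        _ ≤ C * ‖(⟨P v, hPv⟩ : N)‖ := hTnorm
        _ = C * ‖P v‖ := rfl
    _ ≤ (C * ‖(1 - Q) x‖) * ‖v‖ := by
        have : ‖P v‖ ≤ ‖v‖ := sg_contract P hP1 hP2 v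
        calc (C * ‖P v‖) * ‖(1 - Q) x‖ = C * ‖(1 - Q) x‖ * ‖P v‖ := by ring
        _ ≤ C * ‖(1 - Q) x‖ * ‖v‖ := by
            apply mul_le_mul_of_nonneg_left this
            positivity
  -- (1-Q)*P is a selfadjoint idempotent with norm < 1, hence 0
  have hRsa : IsSelfAdjoint ((1 - Q) * P) := by
    rw [IsSelfAdjoint, star_mul, hP1.star_eq, star_sub, star_one, hQ1.star_eq]
    -- P * (1 - Q) = (1 - Q) * P
    rw [mul_sub, sub_mul, mul_one, one_mul, hc]
  have hRidem : ((1 - Q) * P) * ((1 - Q) * P) = (1 - Q) * P := by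
    have hc' : (1 - Q) * P = P * (1 - Q) := by
      rw [mul_sub, sub_mul, mul_one, one_mul, hc]
    rw [mul_assoc, ← mul_assoc P (1-Q) P, ← hc', mul_assoc, ← mul_assoc,
      sg_one_sub_idem hQ2, hP2, hc']
  have hzero : (1 - Q) * P = 0 := by
    by_contra hne
    have : ∃ v, ((1 - Q) * P) v ≠ 0 := by
      by_contra hall
      push_neg at hall
      exact hne (ContinuousLinearMap.ext fun v => by rw [hall v]; rfl)
    obtain ⟨v, hv⟩ := this
    set w := ((1 - Q) * P) v with hw
    have hfix : ((1 - Q) * P) w = w := by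
      rw [hw, ← ContinuousLinearMap.mul_apply, hRidem]
    have : ‖w‖ ≤ (C * ‖(1 - Q) x‖) * ‖w‖ := by
      conv_lhs => rw [← hfix]
      exact hbound w
    have hwpos : 0 < ‖w‖ := norm_pos_iff.mpr hv
    have hlt1 : C * ‖(1 - Q) x‖ < 1 := by
      rw [lt_div_iff₀ hC0] at hlt
      linarith [hlt]
    nlinarith
  show Q ∘L P = P
  have : Q * P = P := by
    have h1 : (1 - Q) * P = P - Q * P := by rw [sub_mul, one_mul]
    rw [h1] at hzero
    have := sub_eq_zero.mp hzero
    exact this.symm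
  exact this

lemma sg_comm3 {a b c : H →L[ℂ] H} (hab : a * b = b * a) : a * (b * c) = b * (a * c) := by
  rw [← mul_assoc, hab, mul_assoc]

lemma sg_T_mul_q {q S : H →L[ℂ] H} (hq2 : q * q = q) (hcqS : q * S = S * q) :
    (q + S - q * S) * q = q := by
  have e1 : (q * S) * q = q * S := by
    rw [mul_assoc, ← hcqS, ← mul_assoc, hq2]
  rw [sub_mul, add_mul, hq2, e1, ← hcqS]; abel

lemma sg_q_mul_T {q S : H →L[ℂ] H} (hq2 : q * q = q) :
    q * (q + S - q * S) = q := by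
  have e1 : q * (q * S) = q * S := by rw [← mul_assoc, hq2]
  rw [mul_sub, mul_add, hq2, e1]; abel

/-- the interval generated by a maximal element is an atom -/

lemma sg_atom {L : Set (H →L[ℂ] H)} (hL : IsCSL L) {P q : H →L[ℂ] H}
    (hP : P ∈ L) (hq : q ∈ L) (hnPq : ¬ pLE P q)
    (hmax : ∀ R ∈ L, ¬ pLE P R → pLE q R → pLE R q) :
    IsAtomOf L (P - P ∘L q) := by
  have hproj := hL.1
  have hcomm := hL.2.1
  have hP2 : P * P = P := (hproj P hP).2
  have hq2 : q * q = q := (hproj q hq).2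
  have hcPq : P * q = q * P := hcomm P hP q hq
  set A : H →L[ℂ] H := P - P * q with hA
  have hA' : P - P ∘L q = A := rfl
  rw [hA']
  have hqA : q * A = 0 := by
    have e1 : q * (P * q) = P * q := by
      rw [sg_comm3 hcPq.symm, hq2]
    rw [hA, mul_sub, e1, ← hcPq, sub_self]
  refine ⟨?_, ?_, ?_⟩
  · -- A ≠ 0
    intro h0
    apply hnPq
    show q ∘L P = P
    have : P - P * q = 0 := h0
    have h1 : P * q = P := (sub_eq_zero.mp this).symm
    show q * P = P
    rw [← hcPq, h1]
  · -- interval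
    refine ⟨P + q - P * q, sg_join_mem hL hP hq, q, hq, ?_, ?_⟩
    · show (P + q - P * q) * q = q
      have e : (P * q) * q = P * q := by rw [mul_assoc, hq2]
      rw [sub_mul, add_mul, hq2, e]; abel
    · rw [hA]; abel
  · -- minimality
    intro R hR S hS hSR hDA
    have hR2 : R * R = R := (hproj R hR).2
    have hS2 : S * S = S := (hproj S hS).2
    have hcPR : P * R = R * P := hcomm P hP R hR
    have hcPS : P * S = S * P := hcomm P hP S hS
    have hcqR : q * R = R * q := hcomm q hq R hR
    have hcqS : q * S = S * q := hcomm q hq S hS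
    have hcRS : R * S = S * R := hcomm R hR S hS
    have hSR' : R * S = S := hSR
    have hDA' : A * (R - S) = R - S := hDA
    have h2 : q * (R - S) = 0 := by
      rw [← hDA', ← mul_assoc, hqA, zero_mul]
    have h2' : q * R = q * S := by
      have : q * R - q * S = 0 := by rw [← mul_sub]; exact h2
      exact sub_eq_zero.mp this
    -- T = q ∨ S
    have hTL : q + S - q * S ∈ L := sg_join_mem hL hq hS
    have hqT : pLE q (q + S - q * S) := sg_T_mul_q hq2 hcqS
    by_cases hPT : pLE P (q + S - q * S)
    · -- case (i): R - S = 0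
      left
      have h4 : q * P + S * P - q * S * P = P := by
        calc q * P + S * P - q * S * P = (q + S - q * S) * P := by rw [sub_mul, add_mul]
        _ = P := hPT
      have e1 : q * S * P = S * (P * q) := by
        rw [mul_assoc, sg_comm3 hcqS, ← hcPq]
      have h5 : S * A = A := by
        calc S * A = S * P - S * (P * q) := by rw [hA, mul_sub]
        _ = q * P + S * P - q * S * P - q * P := by rw [← e1]; abel
        _ = P - q * P := by rw [h4]
        _ = P - P * q := by rw [hcPq]
        _ = A := rfl
      have h6 : S * (R - S) = 0 := by
        have eSR : S * R = S := by rw [← hcRS]; exact hSR'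
        rw [mul_sub, hS2, eSR, sub_self]
      have h7 : S * (R - S) = R - S := by
        rw [← hDA', ← mul_assoc, h5]
      rw [← h7, h6]
    · -- S ≤ q
      have hTq : pLE (q + S - q * S) q := hmax _ hTL hPT hqT
      have hTeq : q + S - q * S = q := by
        have : q * (q + S - q * S) = q + S - q * S := hTq
        rw [← this, sg_q_mul_T hq2]
      have hqS' : q * S = S := by
        have : S - q * S = 0 := by
          have := hTeq
          have h := congrArg (fun X => X - q) this
          calc S - q * S = q + S - q * S - q := by abel
          _ = q - q := by rw [hTeq]
          _ = 0 := sub_self q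
        exact (sub_eq_zero.mp this).symm
      have hqRS : q * R = S := by rw [h2', hqS']
      -- T' = q ∨ R
      have hT'L : q + R - q * R ∈ L := sg_join_mem hL hq hR
      have hqT' : pLE q (q + R - q * R) := sg_T_mul_q hq2 hcqR
      by_cases hPT' : pLE P (q + R - q * R)
      · -- R - S = A
        right
        have h4 : q * P + R * P - q * R * P = P := by
          calc q * P + R * P - q * R * P = (q + R - q * R) * P := by rw [sub_mul, add_mul]
          _ = P := hPT'
        have h8 : A = R * P - S * P := by
          have : q * R * P = S * P := by rw [hqRS]
          rw [← this]
          calc A = P - q * P := by rw [hA, hcPq]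
          _ = q * P + R * P - q * R * P - q * P := by rw [h4]
          _ = R * P - q * R * P := by abel
        have h9 : A * (R - S) = A := by
          calc A * (R - S) = P * (R - S) - P * q * (R - S) := by rw [hA, sub_mul]
          _ = P * (R - S) - P * (q * (R - S)) := by rw [mul_assoc]
          _ = P * (R - S) := by rw [h2, mul_zero, sub_zero]
          _ = P * R - P * S := by rw [mul_sub]
          _ = R * P - S * P := by rw [hcPR, hcPS]
          _ = A := h8.symm
        rw [← hDA', h9]
      · -- R ≤ q, so R = S
        left
        have hT'q : pLE (q + R - q * R) q := hmax _ hT'L hPT' hqT'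
        have hT'eq : q + R - q * R = q := by
          have : q * (q + R - q * R) = q + R - q * R := hT'q
          rw [← this, sg_q_mul_T hq2]
        have hqR' : q * R = R := by
          have : R - q * R = 0 := by
            calc R - q * R = q + R - q * R - q := by abel
            _ = q - q := by rw [hT'eq]
            _ = 0 := sub_self q
          exact (sub_eq_zero.mp this).symm
        have hReqS : R = S := by rw [← hqR']; exact hqRS
        rw [hReqS, sub_self]

lemma sg_pairwise {L : Set (H →L[ℂ] H)} (hL : IsCSL L) {P q₁ q₂ : H →L[ℂ] H}
    (hP : P ∈ L) (hq₁ : q₁ ∈ L) (hq₂ : q₂ ∈ L)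
    (hn₁ : ¬ pLE P q₁) (hn₂ : ¬ pLE P q₂)
    (hmax₁ : ∀ R ∈ L, ¬ pLE P R → pLE q₁ R → pLE R q₁)
    (hmax₂ : ∀ R ∈ L, ¬ pLE P R → pLE q₂ R → pLE R q₂) :
    P - P * q₁ = P - P * q₂ ∨ (P - P * q₁) * (P - P * q₂) = 0 := by
  have hproj := hL.1
  have hcomm := hL.2.1
  have hP2 : P * P = P := (hproj P hP).2
  have h12 : q₁ * q₂ = q₂ * q₁ := hcomm q₁ hq₁ q₂ hq₂
  have hq₁2 : q₁ * q₁ = q₁ := (hproj q₁ hq₁).2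
  have hq₂2 : q₂ * q₂ = q₂ := (hproj q₂ hq₂).2
  have hcP1 : P * q₁ = q₁ * P := hcomm P hP q₁ hq₁
  have hcP2 : P * q₂ = q₂ * P := hcomm P hP q₂ hq₂
  have hJL : q₁ + q₂ - q₁ * q₂ ∈ L := sg_join_mem hL hq₁ hq₂
  have hq₁J : pLE q₁ (q₁ + q₂ - q₁ * q₂) := sg_T_mul_q hq₁2 h12
  by_cases hPJ : pLE P (q₁ + q₂ - q₁ * q₂)
  · right
    have hJP : q₁ * P + q₂ * P - q₁ * q₂ * P = P := by
      calc q₁ * P + q₂ * P - q₁ * q₂ * P = (q₁ + q₂ - q₁ * q₂) * P := by rw [sub_mul, add_mul]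
      _ = P := hPJ
    -- convert to right-multiplied form
    have c1 : q₁ * P = P * q₁ := hcP1.symm
    have c2 : q₂ * P = P * q₂ := hcP2.symm
    have c3 : q₁ * q₂ * P = P * (q₁ * q₂) := by
      rw [mul_assoc, c2, sg_comm3 c1]
    have hJP' : P * q₁ + P * q₂ - P * (q₁ * q₂) = P := by
      rw [← c1, ← c2, ← c3]; exact hJP
    have e1 : P * (P * q₂) = P * q₂ := by rw [← mul_assoc, hP2]
    have e2 : (P * q₁) * P = P * q₁ := by
      rw [mul_assoc, ← hcP1, ← mul_assoc, hP2]
    have e3 : (P * q₁) * (P * q₂) = P * (q₁ * q₂) := by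
      rw [mul_assoc, sg_comm3 hcP1.symm, ← mul_assoc, ← mul_assoc, hP2, mul_assoc]
    calc (P - P * q₁) * (P - P * q₂)
        = P * P - P * (P * q₂) - ((P * q₁) * P - (P * q₁) * (P * q₂)) := by
          rw [sub_mul, mul_sub, mul_sub]
    _ = P - P * q₂ - P * q₁ + P * (q₁ * q₂) := by rw [hP2, e1, e2, e3]; abel
    _ = P - (P * q₁ + P * q₂ - P * (q₁ * q₂)) := by abel
    _ = P - P := by rw [hJP']
    _ = 0 := sub_self P
  · left
    have hJq₁ : pLE (q₁ + q₂ - q₁ * q₂) q₁ := hmax₁ _ hJL hPJ hq₁J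
    have hJeq : q₁ + q₂ - q₁ * q₂ = q₁ := by
      have h : q₁ * (q₁ + q₂ - q₁ * q₂) = q₁ + q₂ - q₁ * q₂ := hJq₁
      rw [← h, sg_q_mul_T hq₁2]
    have h21 : q₁ * q₂ = q₂ := by
      have : q₂ - q₁ * q₂ = 0 := by
        calc q₂ - q₁ * q₂ = q₁ + q₂ - q₁ * q₂ - q₁ := by abel
        _ = q₁ - q₁ := by rw [hJeq]
        _ = 0 := sub_self q₁
      exact (sub_eq_zero.mp this).symm
    have hle21 : pLE q₂ q₁ := h21
    have hle12 : pLE q₁ q₂ := hmax₂ q₁ hq₁ hn₁ hle21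
    have : q₁ = q₂ := by
      have h' : q₂ * q₁ = q₁ := hle12
      rw [← h', ← h12, h21]
    rw [this]


/-- type synonym to carry a custom preorder -/
def SGC (L : Set (H →L[ℂ] H)) : Type _ := {Q : H →L[ℂ] H // Q ∈ L}
def SGC.mk {L : Set (H →L[ℂ] H)} (Q : H →L[ℂ] H) (h : Q ∈ L) : SGC L := Subtype.mk Q h
def SGC.op {L : Set (H →L[ℂ] H)} (Q : SGC L) : H →L[ℂ] H := Subtype.val Q
lemma SGC.mem {L : Set (H →L[ℂ] H)} (Q : SGC L) : Q.op ∈ L := Subtype.prop Q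

/-- if every element of the CSL `L` (on a separable space) is singly generated,
then `L` is hyperatomic. -/
theorem stmt9 [TopologicalSpace.SeparableSpace H]
    (L : Set (H →L[ℂ] H)) (hL : IsCSL L)
    (hsg : ∀ P ∈ L, ∃ x : H, P x = x ∧ orbit L x = (LinearMap.range (P : H →ₗ[ℂ] H) : Set H)) :
    ∀ P ∈ L, P ≠ 0 → HyperatomicIn L P := by
  intro P hP hPne
  obtain ⟨x, hx, horb⟩ := hsg P hP
  obtain ⟨δ, hδ0, hkey⟩ := sg_key hL hP hx horb
  have hproj := hL.1
  have hcomm := hL.2.1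
  have hP1 : IsSelfAdjoint P := (hproj P hP).1
  have hP2 : P * P = P := (hproj P hP).2
  -- Zorn setup
  letI : Preorder (SGC L) :=
    { le := fun Q R => pLE Q.op R.op
      lt := fun Q R => pLE Q.op R.op ∧ ¬ pLE R.op Q.op
      lt_iff_le_not_ge := fun _ _ => Iff.rfl
      le_refl := fun Q => (hproj Q.op Q.mem).2
      le_trans := fun Q R S h1 h2 => by
        show S.op ∘L Q.op = Q.op
        calc S.op ∘L Q.op = S.op ∘L (R.op ∘L Q.op) := by rw [(h1 : R.op ∘L Q.op = Q.op)]
        _ = (S.op ∘L R.op) ∘L Q.op := by rw [ContinuousLinearMap.comp_assoc]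
        _ = R.op ∘L Q.op := by rw [(h2 : S.op ∘L R.op = R.op)]
        _ = Q.op := h1 }
  set s : Set (SGC L) := {Q | ¬ pLE P Q.op} with hs
  have hrange_mono : ∀ Q R : H →L[ℂ] H, Q * Q = Q → pLE Q R →
      LinearMap.range (Q : H →ₗ[ℂ] H) ≤ LinearMap.range (R : H →ₗ[ℂ] H) := by
    intro Q R hQ2 h
    rintro v ⟨w, rfl⟩
    refine ⟨Q w, ?_⟩
    have h1 : R (Q w) = Q w := ContinuousLinearMap.ext_iff.1 (h : R ∘L Q = Q) w
    have h2 : Q (Q w) = Q w := ContinuousLinearMap.ext_iff.1 (hQ2 : Q * Q = Q) w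
    rw [ContinuousLinearMap.coe_coe, h1, ContinuousLinearMap.coe_coe]
  have hchain : ∀ c ⊆ s, IsChain (· ≤ ·) c → ∀ y ∈ c,
      ∃ ub ∈ s, ∀ z ∈ c, z ≤ ub := by
    intro c hcs hc y hyc
    set Sc : Set (H →L[ℂ] H) := SGC.op '' c with hSc
    have hSL : Sc ⊆ L := by rintro _ ⟨Q, -, rfl⟩; exact Q.mem
    obtain ⟨G, hGL, hGub, hGr⟩ := hL.2.2.2.2.2 Sc hSL
    refine ⟨SGC.mk G hGL, ?_, fun z hz => show pLE z.op G from hGub z.op ⟨z, hz, rfl⟩⟩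
    -- show mk G ∈ s
    show ¬ pLE P G
    intro hPG
    have hG2 : G * G = G := (hproj G hGL).2
    have hxG : x ∈ LinearMap.range (G : H →ₗ[ℂ] H) := by
      rw [sg_mem_range_iff hG2]
      have h1 : G (P x) = P x := ContinuousLinearMap.ext_iff.1 (hPG : G ∘L P = P) x
      rw [hx] at h1; exact h1
    rw [hGr] at hxG
    haveI : Nonempty Sc := ⟨⟨y.op, ⟨y, hyc, rfl⟩⟩⟩
    have hdir : Directed (· ≤ ·) (fun Q : Sc => LinearMap.range ((Q.1 : H →L[ℂ] H) : H →ₗ[ℂ] H)) := by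
      rintro ⟨a, ha⟩ ⟨b, hb⟩
      obtain ⟨za, hza, rfl⟩ := ha
      obtain ⟨zb, hzb, rfl⟩ := hb
      rcases eq_or_ne za zb with rfl | hne
      · exact ⟨⟨za.op, ⟨za, hza, rfl⟩⟩, le_refl _, le_refl _⟩
      · rcases hc hza hzb hne with h | h
        · refine ⟨⟨zb.op, ⟨zb, hzb, rfl⟩⟩, ?_, le_refl _⟩
          exact hrange_mono za.op zb.op (hproj za.op za.mem).2 h
        · refine ⟨⟨za.op, ⟨za, hza, rfl⟩⟩, le_refl _, ?_⟩
          exact hrange_mono zb.op za.op (hproj zb.op zb.mem).2 h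
    have hfar : ∀ u ∈ (⨆ Q ∈ Sc, LinearMap.range (Q : H →ₗ[ℂ] H) : Submodule ℂ H), δ ≤ ‖x - u‖ := by
      intro u hu
      rw [iSup_subtype'] at hu
      obtain ⟨⟨Q, hQSc⟩, hQu⟩ := (Submodule.mem_iSup_of_directed _ hdir).1 hu
      obtain ⟨z, hzc, rfl⟩ := hQSc
      have hQ2 : z.op * z.op = z.op := (hproj z.op z.mem).2
      have hQ1 : IsSelfAdjoint z.op := (hproj z.op z.mem).1
      have hQu' : z.op u = u := (sg_mem_range_iff hQ2 u).1 hQu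
      have hnP : ¬ pLE P z.op := hcs hzc
      have hk := hkey z.op z.mem hnP
      have heq : (1 - z.op) x = (1 - z.op) (x - u) := by
        have : (1 - z.op) u = 0 := by
          show u - z.op u = 0
          rw [hQu', sub_self]
        rw [map_sub, this, sub_zero]
      have hsa : IsSelfAdjoint (1 - z.op) := by
        rw [IsSelfAdjoint, star_sub, star_one, hQ1.star_eq]
      calc δ ≤ ‖(1 - z.op) x‖ := hk
      _ = ‖(1 - z.op) (x - u)‖ := by rw [heq]
      _ ≤ ‖x - u‖ := sg_contract _ hsa (sg_one_sub_idem hQ2) _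
    have hclosed : IsClosed {u : H | δ ≤ ‖x - u‖} := by
      have : {u : H | δ ≤ ‖x - u‖} = (fun u => ‖x - u‖) ⁻¹' (Set.Ici δ) := rfl
      rw [this]
      exact IsClosed.preimage (by continuity) isClosed_Ici
    have hxin : x ∈ {u : H | δ ≤ ‖x - u‖} := by
      have h1 : (↑((⨆ Q ∈ Sc, LinearMap.range (Q : H →ₗ[ℂ] H) : Submodule ℂ H).topologicalClosure) : Set H)
          ⊆ {u : H | δ ≤ ‖x - u‖} := by
        rw [Submodule.topologicalClosure_coe]
        exact closure_minimal hfar hclosed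
      exact h1 hxG
    have : δ ≤ ‖x - x‖ := hxin
    rw [sub_self, norm_zero] at this
    linarith
  have hzorn : ∀ F ∈ L, ¬ pLE P F → ∃ q ∈ L, ¬ pLE P q ∧ pLE F q ∧
      (∀ R ∈ L, ¬ pLE P R → pLE q R → pLE R q) := by
    intro F hF hnPF
    obtain ⟨m, hFm, hmax⟩ := zorn_le_nonempty₀ s hchain (SGC.mk F hF) hnPF
    exact ⟨m.op, m.mem, hmax.1, hFm,
      fun R hR hnPR hqR => hmax.2 (show ¬ pLE P (SGC.mk R hR).op from hnPR) hqR⟩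
  -- the set of atoms
  set 𝒜 : Set (H →L[ℂ] H) := {A | ∃ q ∈ L, ¬ pLE P q ∧
      (∀ R ∈ L, ¬ pLE P R → pLE q R → pLE R q) ∧ A = P - P * q} with h𝒜
  -- basic facts about members of 𝒜
  have hAfacts : ∀ A ∈ 𝒜, IsSelfAdjoint A ∧ A * A = A ∧ δ ≤ ‖A x‖ := by
    rintro A ⟨q, hqL, hnPq, hmaxq, rfl⟩
    have hq2 : q * q = q := (hproj q hqL).2
    have hq1 : IsSelfAdjoint q := (hproj q hqL).1
    have hcPq : P * q = q * P := hcomm P hP q hqL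
    refine ⟨?_, ?_, ?_⟩
    · rw [IsSelfAdjoint, star_sub, hP1.star_eq, star_mul, hP1.star_eq, hq1.star_eq, ← hcPq]
    · have e1 : (P * q) * P = P * q := by rw [mul_assoc, ← hcPq, ← mul_assoc, hP2]
      have e2 : P * (P * q) = P * q := by rw [← mul_assoc, hP2]
      have e3 : (P * q) * (P * q) = P * q := by
        rw [mul_assoc, sg_comm3 hcPq.symm, hq2, ← mul_assoc, hP2]
      rw [sub_mul, mul_sub, mul_sub, hP2, e2, e1, e3]
      abel
    · have hAx : (P - P * q) x = (1 - q) x := by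
        have h1 : P (q x) = q x := by
          have : (P * q) x = (q * P) x := by rw [hcPq]
          have h2 : P (q x) = q (P x) := this
          rw [hx] at h2; exact h2
        show P x - (P * q) x = (1 - q) x
        show P x - P (q x) = (1 - q) x
        rw [hx, h1]
        rfl
      rw [hAx]
      exact hkey q hqL hnPq
  -- inner product orthogonality
  have hAadj : ∀ A : H →L[ℂ] H, IsSelfAdjoint A → ∀ B : H →L[ℂ] H, ∀ w : H,
      ⟪A w, B w⟫_ℂ = ⟪w, (A * B) w⟫_ℂ := by
    intro A hA B w
    have h := ContinuousLinearMap.adjoint_inner_left A (B w) w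
    rw [hA.adjoint_eq] at h
    exact h
  have hAinner : ∀ A ∈ 𝒜, ∀ B ∈ 𝒜, A ≠ B → ⟪A x, B x⟫_ℂ = 0 := by
    intro A hA B hB hne
    obtain ⟨q₁, hq₁L, hn₁, hmax₁, hA1⟩ := hA
    obtain ⟨q₂, hq₂L, hn₂, hmax₂, hB2⟩ := hB
    have hABzero : A * B = 0 := by
      rcases sg_pairwise hL hP hq₁L hq₂L hn₁ hn₂ hmax₁ hmax₂ with h | h
      · exact absurd (by rw [hA1, hB2, h]) hne
      · rw [hA1, hB2]; exact h
    have hAsa : IsSelfAdjoint A := by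
      obtain ⟨h1, -, -⟩ := hAfacts A ⟨q₁, hq₁L, hn₁, hmax₁, hA1⟩
      exact h1
    rw [hAadj A hAsa B x, hABzero]
    simp
  have hAxx : ∀ A ∈ 𝒜, ⟪x, A x⟫_ℂ = (‖A x‖ : ℂ)^2 := by
    intro A hA
    obtain ⟨h1, h2, -⟩ := hAfacts A hA
    have e1 : ⟪A x, A x⟫_ℂ = ⟪x, A x⟫_ℂ := by
      rw [hAadj A h1 A x, h2]
    rw [← e1, inner_self_eq_norm_sq_to_K]
    norm_cast
  -- finiteness
  have hfin : 𝒜.Finite := by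
    by_contra hinf
    have hinf' : 𝒜.Infinite := hinf
    obtain ⟨n, hn⟩ := exists_nat_gt (‖x‖^2 / δ^2)
    obtain ⟨t, hts, htc⟩ := hinf'.exists_subset_card_eq n
    set u : H := ∑ A ∈ t, A x with hu
    set W : ℝ := ∑ A ∈ t, ‖A x‖^2 with hW
    have hWc : ((W : ℂ)) = ∑ A ∈ t, (‖A x‖ : ℂ)^2 := by
      rw [hW]
      push_cast
      rfl
    have hxu : ⟪x, u⟫_ℂ = (W : ℂ) := by
      rw [hu, inner_sum, hWc]
      exact Finset.sum_congr rfl fun A hA => hAxx A (hts hA)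
    have huu : ⟪u, u⟫_ℂ = (W : ℂ) := by
      rw [hu, sum_inner, hWc]
      refine Finset.sum_congr rfl fun A hA => ?_
      rw [inner_sum]
      rw [Finset.sum_eq_single_of_mem A hA]
      · have e1 : ⟪A x, A x⟫_ℂ = ⟪x, A x⟫_ℂ := by
          obtain ⟨h1, h2, -⟩ := hAfacts A (hts hA)
          rw [hAadj A h1 A x, h2]
        rw [e1]
        exact hAxx A (hts hA)
      · intro B hB hne
        exact hAinner A (hts hA) B (hts hB) (Ne.symm hne)
    have hW0 : 0 ≤ W := by
      rw [hW]
      exact Finset.sum_nonneg fun A _ => sq_nonneg _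
    have hnu : ‖u‖^2 = W := by
      have h1 : RCLike.re ⟪u, u⟫_ℂ = ‖u‖^2 := inner_self_eq_norm_sq (𝕜 := ℂ) u
      rw [huu] at h1
      rw [← h1]
      norm_cast
    have hub : W ≤ ‖x‖ * ‖u‖ := by
      have h1 : ‖(⟪x, u⟫_ℂ)‖ ≤ ‖x‖ * ‖u‖ := norm_inner_le_norm _ _
      rw [hxu] at h1
      rwa [Complex.norm_real, Real.norm_eq_abs, abs_of_nonneg hW0] at h1
    have hWle : W ≤ ‖x‖^2 := by
      have hu0 : 0 ≤ ‖u‖ := norm_nonneg u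
      rcases eq_or_lt_of_le hu0 with h | h
      · rw [← hnu, ← h]; simpa using sq_nonneg ‖x‖
      · have : ‖u‖ ≤ ‖x‖ := by
          have := hub
          rw [← hnu] at this
          nlinarith
        nlinarith [hnu]
    have hlb : (n : ℝ) * δ^2 ≤ W := by
      rw [hW, ← htc]
      have : ∀ A ∈ t, δ^2 ≤ ‖A x‖^2 := by
        intro A hA
        obtain ⟨-, -, h3⟩ := hAfacts A (hts hA)
        nlinarith
      calc (t.card : ℝ) * δ^2 = ∑ _A ∈ t, δ^2 := by
            rw [Finset.sum_const, nsmul_eq_mul]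
      _ ≤ ∑ A ∈ t, ‖A x‖^2 := Finset.sum_le_sum this
    have : (n : ℝ) * δ^2 ≤ ‖x‖^2 := le_trans hlb hWle
    rw [div_lt_iff₀ (by positivity)] at hn
    nlinarith
  -- enumerate the atoms
  obtain ⟨t0, ht0⟩ := hfin.exists_finset_coe
  refine ⟨t0.card, fun j => (t0.equivFin.symm j).1, ?_, ?_, ?_⟩
  · intro j
    have hmem : ((t0.equivFin.symm j).1 : H →L[ℂ] H) ∈ 𝒜 := by
      rw [← ht0]
      exact Finset.mem_coe.mpr (t0.equivFin.symm j).2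
    obtain ⟨q, hqL, hnPq, hmaxq, hEq⟩ := hmem
    show IsAtomOf L ((t0.equivFin.symm j).1 : H →L[ℂ] H)
    rw [hEq]
    exact sg_atom hL hP hqL hnPq hmaxq
  · intro j
    have hmem : ((t0.equivFin.symm j).1 : H →L[ℂ] H) ∈ 𝒜 := by
      rw [← ht0]
      exact Finset.mem_coe.mpr (t0.equivFin.symm j).2
    obtain ⟨q, hqL, hnPq, hmaxq, hEq⟩ := hmem
    show pLE ((t0.equivFin.symm j).1 : H →L[ℂ] H) P
    rw [hEq]
    show P ∘L (P - P * q) = P - P * q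
    show P * (P - P * q) = P - P * q
    rw [mul_sub, ← mul_assoc, hP2]
  · intro F hF hFall
    by_contra hnPF
    obtain ⟨q, hqL, hnPq, hFq, hqmax⟩ := hzorn F hF hnPF
    have hmemA : P - P * q ∈ 𝒜 := ⟨q, hqL, hnPq, hqmax, rfl⟩
    have : P - P * q ∈ (t0 : Set (H →L[ℂ] H)) := by rw [ht0]; exact hmemA
    obtain ⟨j, hj⟩ : ∃ j, ((t0.equivFin.symm j).1 : H →L[ℂ] H) = P - P * q := by
      refine ⟨t0.equivFin ⟨P - P * q, Finset.mem_coe.mp this⟩, ?_⟩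
      rw [Equiv.symm_apply_apply]
    have hFA : F ∘L ((t0.equivFin.symm j).1 : H →L[ℂ] H) = (t0.equivFin.symm j).1 := hFall j
    rw [hj] at hFA
    have hFA' : F * (P - P * q) = P - P * q := hFA
    -- q * (P - P*q) = 0
    have hcPq : P * q = q * P := hcomm P hP q hqL
    have hq2 : q * q = q := (hproj q hqL).2
    have hqA : q * (P - P * q) = 0 := by
      have e1 : q * (P * q) = P * q := by
        rw [sg_comm3 hcPq.symm, hq2]
      rw [mul_sub, e1, ← hcPq, sub_self]
    have hqF : q * F = F := hFq
    have hzero : P - P * q = 0 := by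
      calc P - P * q = F * (P - P * q) := hFA'.symm
      _ = (q * F) * (P - P * q) := by rw [hqF]
      _ = q * (F * (P - P * q)) := by rw [mul_assoc]
      _ = q * (P - P * q) := by rw [hFA']
      _ = 0 := hqA
    apply hnPq
    show q ∘L P = P
    show q * P = P
    rw [← hcPq]
    exact (sub_eq_zero.mp hzero).symm
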